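/- Let U be a nonnegative random variable and C > 0 with lim_{t→∞} t P(U > t) = C. Then lim_{λ → 0⁺} E[U e^{-λU}] / (-log λ) = C. -/

import Mathlib

open MeasureTheory Real Filter Set
open scoped ENNReal

lemma aux_integral_exp_Ioi {l : ℝ} (hl : 0 < l) (a : ℝ) :
    ∫ x in Ioi a, Real.exp (-(l * x)) = Real.exp (-(l * a)) / l := by
  have hderiv : ∀ x ∈ Ici a, HasDerivAt (fun x => -Real.exp (-(l * x)) / l)
      (Real.exp (-(l * x))) x := by
    intro x _
    have h1 : HasDerivAt (fun x : ℝ => -(l * x)) (-l) x := by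
      have := ((hasDerivAt_id' x).const_mul l).neg; rw [mul_one] at this; exact this
    have h2 := (h1.exp).neg.div_const l
    exact h2.congr_deriv (by field_simp)
  have hint : IntegrableOn (fun x => Real.exp (-(l * x))) (Ioi a) := by
    simpa [neg_mul] using exp_neg_integrableOn_Ioi a hl
  have htend : Tendsto (fun x => -Real.exp (-(l * x)) / l) atTop (nhds 0) := by
    have : Tendsto (fun x : ℝ => -(l * x)) atTop atBot :=
      tendsto_neg_atBot_iff.2 (tendsto_id.const_mul_atTop hl)
    have := (Real.tendsto_exp_atBot.comp this).neg.div_const l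
    simpa using this
  have := MeasureTheory.integral_Ioi_of_hasDerivAt_of_tendsto' hderiv hint htend
  rw [this]
  ring

lemma aux_lint_exp_Ioi {l : ℝ} (hl : 0 < l) (a : ℝ) :
    ∫⁻ t in Ioi a, ENNReal.ofReal (Real.exp (-(l * t))) =
      ENNReal.ofReal (Real.exp (-(l * a)) / l) := by
  rw [← aux_integral_exp_Ioi hl a]
  rw [← MeasureTheory.ofReal_integral_eq_lintegral_ofReal]
  · exact (by simpa [neg_mul] using exp_neg_integrableOn_Ioi a hl : IntegrableOn (fun t => Real.exp (-(l * t))) (Ioi a))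
  · exact Filter.Eventually.of_forall fun x => (Real.exp_pos _).le

lemma aux_lint_div (c T Y : ℝ) (hc : 0 ≤ c) (hT : 0 < T) (hTY : T ≤ Y) :
    ∫⁻ t in Ioc T Y, ENNReal.ofReal (c / t) =
      ENNReal.ofReal (c * (Real.log Y - Real.log T)) := by
  have hint : IntegrableOn (fun t => c / t) (Ioc T Y) := by
    apply (ContinuousOn.integrableOn_Icc ?_).mono_set Ioc_subset_Icc_self
    apply ContinuousOn.div continuousOn_const continuousOn_id
    intro x hx
    exact (lt_of_lt_of_le hT hx.1).ne'
  have hval : ∫ t in Ioc T Y, c / t = c * (Real.log Y - Real.log T) := by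
    rw [← intervalIntegral.integral_of_le hTY]
    have h0 : (0:ℝ) ∉ uIcc T Y := by
      rw [Set.uIcc_of_le hTY]
      intro h
      exact absurd h.1 (not_le.2 hT)
    simp only [div_eq_mul_inv]
    rw [intervalIntegral.integral_const_mul, integral_inv h0,
      Real.log_div (by linarith : Y ≠ 0) hT.ne']
  rw [← hval, ← MeasureTheory.ofReal_integral_eq_lintegral_ofReal hint]
  exact (ae_restrict_iff' measurableSet_Ioc).2 (Filter.Eventually.of_forall
    fun x hx => div_nonneg hc (hT.trans hx.1).le)

lemma aux_hasDeriv_exp {l : ℝ} (hl : l ≠ 0) (x : ℝ) :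
    HasDerivAt (fun t => (1 - Real.exp (-(l * t))) / l) (Real.exp (-(l * x))) x := by
  have h1 : HasDerivAt (fun t : ℝ => -(l * t)) (-l) x := by
    have := ((hasDerivAt_id' x).const_mul l).neg; rw [mul_one] at this; exact this
  have h2 := ((h1.exp).const_sub 1).div_const l
  exact h2.congr_deriv (by field_simp)

lemma aux_A {l : ℝ} (hl : 0 < l) (u : ℝ) :
    ∫ t in (0:ℝ)..u, Real.exp (-(l * t)) = (1 - Real.exp (-(l * u))) / l := by
  have := intervalIntegral.integral_eq_sub_of_hasDerivAt
    (f := fun t => (1 - Real.exp (-(l * t))) / l)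
    (fun x _ => aux_hasDeriv_exp hl.ne' x)
    ((Continuous.intervalIntegrable (by continuity) 0 u))
  rw [this]; simp

lemma aux_B {l : ℝ} (hl : 0 < l) (u : ℝ) :
    ∫ t in (0:ℝ)..u, l * t * Real.exp (-(l * t)) =
      (1 - Real.exp (-(l * u))) / l - u * Real.exp (-(l * u)) := by
  have hd : ∀ x ∈ uIcc (0:ℝ) u, HasDerivAt
      (fun t => (1 - Real.exp (-(l * t))) / l - t * Real.exp (-(l * t)))
      (l * x * Real.exp (-(l * x))) x := by
    intro x _
    have h1 : HasDerivAt (fun t : ℝ => -(l * t)) (-l) x := by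
      have := ((hasDerivAt_id' x).const_mul l).neg; rw [mul_one] at this; exact this
    have h2 : HasDerivAt (fun t : ℝ => t * Real.exp (-(l * t)))
        (Real.exp (-(l * x)) + x * (Real.exp (-(l * x)) * (-l))) x := by
      have := (hasDerivAt_id' x).mul h1.exp; rw [one_mul] at this; exact this
    have := (aux_hasDeriv_exp (l := l) hl.ne' x).sub h2
    exact this.congr_deriv (by ring)
  have := intervalIntegral.integral_eq_sub_of_hasDerivAt hd
    ((Continuous.intervalIntegrable (by continuity) 0 u))
  rw [this]; simp

lemma aux_repr {Ω : Type*} [MeasurableSpace Ω] (μ : Measure Ω) [IsProbabilityMeasure μ]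
    (U : Ω → ℝ) (hU : Measurable U) (hU0 : ∀ ω, 0 ≤ U ω) {l : ℝ} (hl : 0 < l) :
    ∫ ω, U ω * Real.exp (-(l * U ω)) ∂μ =
      (∫⁻ t in Ioi 0, μ {ω | t < U ω} * ENNReal.ofReal (Real.exp (-(l * t)))).toReal
      - (∫⁻ t in Ioi 0, μ {ω | t < U ω} * ENNReal.ofReal (l * t * Real.exp (-(l * t)))).toReal := by
  set A : ℝ → ℝ := fun u => (1 - Real.exp (-(l * u))) / l with hA
  set B : ℝ → ℝ := fun u => (1 - Real.exp (-(l * u))) / l - u * Real.exp (-(l * u)) with hB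
  have hAnn : ∀ u, 0 ≤ u → 0 ≤ A u := by
    intro u hu
    apply div_nonneg _ hl.le
    simp only [sub_nonneg]
    exact Real.exp_le_one_iff.2 (by nlinarith)
  have hBnn : ∀ u, 0 ≤ u → 0 ≤ B u := by
    intro u hu
    have h := intervalIntegral.integral_nonneg (μ := volume) hu
      (f := fun x => l * x * Real.exp (-(l * x)))
      (fun x hx => by
        show 0 ≤ l * x * Real.exp (-(l * x))
        exact mul_nonneg (mul_nonneg hl.le hx.1) (Real.exp_pos _).le)
    rw [aux_B hl u] at h
    simpa [hB] using h
  have hAle : ∀ u, A u ≤ 1 / l := by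
    intro u
    simp only [hA]
    gcongr
    have := Real.exp_pos (-(l * u)); linarith
  have hBleA : ∀ u, 0 ≤ u → B u ≤ A u := by
    intro u hu
    simp only [hA, hB]
    have h1 : 0 ≤ u * Real.exp (-(l * u)) := mul_nonneg hu (Real.exp_pos _).le
    linarith
  have hAm : Measurable fun ω => A (U ω) := by
    apply Measurable.div_const _ l
    exact (measurable_const.sub ((hU.const_mul l).neg.exp))
  have hBm : Measurable fun ω => B (U ω) := by
    apply hAm.sub
    exact hU.mul ((hU.const_mul l).neg.exp)
  have hAint : Integrable (fun ω => A (U ω)) μ := by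
    apply (integrable_const (1 / l)).mono' hAm.aestronglyMeasurable
    apply Filter.Eventually.of_forall
    intro ω
    rw [Real.norm_eq_abs, abs_of_nonneg (hAnn _ (hU0 ω))]
    exact hAle _
  have hBint : Integrable (fun ω => B (U ω)) μ := by
    apply (integrable_const (1 / l)).mono' hBm.aestronglyMeasurable
    apply Filter.Eventually.of_forall
    intro ω
    rw [Real.norm_eq_abs, abs_of_nonneg (hBnn _ (hU0 ω))]
    exact (hBleA _ (hU0 ω)).trans (hAle _)
  have key : ∀ u : ℝ, u * Real.exp (-(l * u)) = A u - B u := by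
    intro u; simp only [hA, hB]; ring
  have hUnn : 0 ≤ᵐ[μ] U := Filter.Eventually.of_forall hU0
  have hLC1 : ∫⁻ ω, ENNReal.ofReal (A (U ω)) ∂μ =
      ∫⁻ t in Ioi 0, μ {ω | t < U ω} * ENNReal.ofReal (Real.exp (-(l * t))) := by
    have := MeasureTheory.lintegral_comp_eq_lintegral_meas_lt_mul μ
      (f := U) (g := fun t => Real.exp (-(l * t))) hUnn hU.aemeasurable
      (fun t _ => Continuous.intervalIntegrable (by fun_prop) 0 t)
      (Filter.Eventually.of_forall fun t => (Real.exp_pos _).le)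
    rw [← this]
    congr 1
    ext ω
    rw [aux_A hl (U ω)]
  have hLC2 : ∫⁻ ω, ENNReal.ofReal (B (U ω)) ∂μ =
      ∫⁻ t in Ioi 0, μ {ω | t < U ω} * ENNReal.ofReal (l * t * Real.exp (-(l * t))) := by
    have := MeasureTheory.lintegral_comp_eq_lintegral_meas_lt_mul μ
      (f := U) (g := fun t => l * t * Real.exp (-(l * t))) hUnn hU.aemeasurable
      (fun t _ => Continuous.intervalIntegrable (by fun_prop) 0 t)
      ((ae_restrict_iff' measurableSet_Ioi).2 (Filter.Eventually.of_forall
        fun t ht => mul_nonneg (mul_nonneg hl.le (le_of_lt ht)) (Real.exp_pos _).le))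
    rw [← this]
    congr 1
    ext ω
    rw [aux_B hl (U ω)]
  have hIA : ∫ ω, A (U ω) ∂μ = (∫⁻ ω, ENNReal.ofReal (A (U ω)) ∂μ).toReal := by
    rw [MeasureTheory.integral_eq_lintegral_of_nonneg_ae
      (Filter.Eventually.of_forall fun ω => hAnn _ (hU0 ω)) hAm.aestronglyMeasurable]
  have hIB : ∫ ω, B (U ω) ∂μ = (∫⁻ ω, ENNReal.ofReal (B (U ω)) ∂μ).toReal := by
    rw [MeasureTheory.integral_eq_lintegral_of_nonneg_ae
      (Filter.Eventually.of_forall fun ω => hBnn _ (hU0 ω)) hBm.aestronglyMeasurable]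
  calc ∫ ω, U ω * Real.exp (-(l * U ω)) ∂μ
      = ∫ ω, (A (U ω) - B (U ω)) ∂μ := by
        congr 1; ext ω; rw [key]
    _ = ∫ ω, A (U ω) ∂μ - ∫ ω, B (U ω) ∂μ := MeasureTheory.integral_sub hAint hBint
    _ = _ := by rw [hIA, hIB, hLC1, hLC2]

lemma aux_J2 {G : ℝ → ℝ≥0∞} {M l : ℝ} (hM : 0 ≤ M) (hl : 0 < l)
    (hGM : ∀ t : ℝ, 0 < t → G t ≤ ENNReal.ofReal (M / t)) :
    ∫⁻ t in Ioi 0, G t * ENNReal.ofReal (l * t * Real.exp (-(l * t))) ≤ ENNReal.ofReal M := by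
  have hmeas : Measurable fun t : ℝ => ENNReal.ofReal (M * l) *
      ENNReal.ofReal (Real.exp (-(l * t))) := by fun_prop
  calc ∫⁻ t in Ioi 0, G t * ENNReal.ofReal (l * t * Real.exp (-(l * t)))
      ≤ ∫⁻ t in Ioi 0, ENNReal.ofReal (M * l) * ENNReal.ofReal (Real.exp (-(l * t))) := by
        apply setLIntegral_mono hmeas
        intro t ht
        have ht0 : (0:ℝ) < t := ht
        calc G t * ENNReal.ofReal (l * t * Real.exp (-(l * t)))
            ≤ ENNReal.ofReal (M / t) * ENNReal.ofReal (l * t * Real.exp (-(l * t))) :=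
              mul_le_mul_left (hGM t ht0) _
          _ = ENNReal.ofReal (M / t * (l * t * Real.exp (-(l * t)))) :=
              (ENNReal.ofReal_mul (div_nonneg hM ht0.le)).symm
          _ = ENNReal.ofReal (M * l * Real.exp (-(l * t))) := by
              congr 1; field_simp
          _ = ENNReal.ofReal (M * l) * ENNReal.ofReal (Real.exp (-(l * t))) :=
              ENNReal.ofReal_mul (by positivity)
    _ = ENNReal.ofReal (M * l) * ∫⁻ t in Ioi 0, ENNReal.ofReal (Real.exp (-(l * t))) :=
        lintegral_const_mul' _ _ ENNReal.ofReal_ne_top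
    _ = ENNReal.ofReal (M * l) * ENNReal.ofReal (Real.exp (-(l * 0)) / l) := by
        rw [aux_lint_exp_Ioi hl 0]
    _ = ENNReal.ofReal (M * l * (Real.exp (-(l * 0)) / l)) :=
        (ENNReal.ofReal_mul (by positivity)).symm
    _ = ENNReal.ofReal M := by
        congr 1
        rw [mul_zero, neg_zero, Real.exp_zero]
        field_simp

lemma aux_J1_fin {G : ℝ → ℝ≥0∞} {M l : ℝ} (hM : 0 ≤ M) (hl : 0 < l)
    (hG1 : ∀ t, G t ≤ 1)
    (hGM : ∀ t : ℝ, 0 < t → G t ≤ ENNReal.ofReal (M / t)) :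
    ∫⁻ t in Ioi 0, G t * ENNReal.ofReal (Real.exp (-(l * t))) ≠ ⊤ := by
  rw [← Ioc_union_Ioi_eq_Ioi (zero_le_one (α := ℝ)),
    lintegral_union measurableSet_Ioi Ioc_disjoint_Ioi_same]
  apply ENNReal.add_ne_top.2
  constructor
  · apply ne_top_of_le_ne_top (b := volume (Ioc (0:ℝ) 1))
    · rw [Real.volume_Ioc]; exact ENNReal.ofReal_ne_top
    · calc ∫⁻ t in Ioc (0:ℝ) 1, G t * ENNReal.ofReal (Real.exp (-(l * t)))
          ≤ ∫⁻ _ in Ioc (0:ℝ) 1, 1 := by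
            apply setLIntegral_mono measurable_const
            intro t ht
            calc G t * ENNReal.ofReal (Real.exp (-(l * t))) ≤ 1 * 1 := by
                  apply mul_le_mul' (hG1 t)
                  exact ENNReal.ofReal_le_one.2 (Real.exp_le_one_iff.2
                    (neg_nonpos.2 (mul_nonneg hl.le ht.1.le)))
              _ = 1 := one_mul 1
        _ = volume (Ioc (0:ℝ) 1) := setLIntegral_one _
  · apply ne_top_of_le_ne_top (b := ENNReal.ofReal M * ENNReal.ofReal (Real.exp (-(l * 1)) / l))
    · exact ENNReal.mul_ne_top ENNReal.ofReal_ne_top ENNReal.ofReal_ne_top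
    · calc ∫⁻ t in Ioi (1:ℝ), G t * ENNReal.ofReal (Real.exp (-(l * t)))
          ≤ ∫⁻ t in Ioi (1:ℝ), ENNReal.ofReal M * ENNReal.ofReal (Real.exp (-(l * t))) := by
            apply setLIntegral_mono (by fun_prop)
            intro t ht
            apply mul_le_mul_left
            exact (hGM t (lt_trans one_pos ht)).trans
              (ENNReal.ofReal_le_ofReal (div_le_self hM (le_of_lt ht)))
        _ = ENNReal.ofReal M * ∫⁻ t in Ioi (1:ℝ), ENNReal.ofReal (Real.exp (-(l * t))) :=
            lintegral_const_mul' _ _ ENNReal.ofReal_ne_top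
        _ = ENNReal.ofReal M * ENNReal.ofReal (Real.exp (-(l * 1)) / l) := by
            rw [aux_lint_exp_Ioi hl 1]

lemma aux_J1_lower {G : ℝ → ℝ≥0∞} (hGmeas : Measurable G) {c T δ l : ℝ} (hc : 0 ≤ c)
    (hGc : ∀ t, T ≤ t → ENNReal.ofReal (c / t) ≤ G t) (hT : 1 ≤ T) (hδ : 0 < δ)
    (hl : 0 < l) (hTδ : T ≤ δ / l) :
    ENNReal.ofReal (c * Real.exp (-δ) * (Real.log (δ / l) - Real.log T)) ≤
      ∫⁻ t in Ioi 0, G t * ENNReal.ofReal (Real.exp (-(l * t))) := by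
  have hT0 : (0:ℝ) < T := lt_of_lt_of_le one_pos hT
  calc ENNReal.ofReal (c * Real.exp (-δ) * (Real.log (δ / l) - Real.log T))
      = ∫⁻ t in Ioc T (δ / l), ENNReal.ofReal (c * Real.exp (-δ) / t) :=
        (aux_lint_div _ _ _ (by positivity) hT0 hTδ).symm
    _ ≤ ∫⁻ t in Ioc T (δ / l), G t * ENNReal.ofReal (Real.exp (-(l * t))) := by
        apply setLIntegral_mono (hGmeas.mul (by fun_prop))
        intro t ht
        have ht0 : (0:ℝ) < t := lt_of_lt_of_le hT0 ht.1.le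
        calc ENNReal.ofReal (c * Real.exp (-δ) / t)
            = ENNReal.ofReal ((c / t) * Real.exp (-δ)) := by congr 1; ring
          _ = ENNReal.ofReal (c / t) * ENNReal.ofReal (Real.exp (-δ)) :=
              ENNReal.ofReal_mul (div_nonneg hc ht0.le)
          _ ≤ G t * ENNReal.ofReal (Real.exp (-(l * t))) := by
              apply mul_le_mul' (hGc t ht.1.le)
              apply ENNReal.ofReal_le_ofReal
              apply Real.exp_le_exp.2
              have : t * l ≤ δ := (le_div_iff₀ hl).1 ht.2
              nlinarith
    _ ≤ ∫⁻ t in Ioi 0, G t * ENNReal.ofReal (Real.exp (-(l * t))) := by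
        apply lintegral_mono_set
        exact Ioc_subset_Ioi_self.trans (Ioi_subset_Ioi hT0.le)

lemma aux_J1_upper {G : ℝ → ℝ≥0∞} (hGmeas : Measurable G) {c T l : ℝ} (hc : 0 ≤ c)
    (hG1 : ∀ t, G t ≤ 1) (hGc : ∀ t, T ≤ t → G t ≤ ENNReal.ofReal (c / t))
    (hT : 1 ≤ T) (hl : 0 < l) (hlT : T ≤ 1 / l) :
    ∫⁻ t in Ioi 0, G t * ENNReal.ofReal (Real.exp (-(l * t))) ≤
      ENNReal.ofReal (T + c * (-Real.log l - Real.log T) + c) := by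
  have hT0 : (0:ℝ) < T := lt_of_lt_of_le one_pos hT
  have hlog : Real.log T ≤ -Real.log l := by
    calc Real.log T ≤ Real.log (1 / l) := Real.log_le_log hT0 hlT
      _ = -Real.log l := by rw [one_div, Real.log_inv]
  have hnn : 0 ≤ c * (-Real.log l - Real.log T) := mul_nonneg hc (by linarith)
  rw [ENNReal.ofReal_add (by linarith) hc, ENNReal.ofReal_add (by linarith) hnn]
  rw [← Ioc_union_Ioi_eq_Ioi hT0.le,
    lintegral_union measurableSet_Ioi Ioc_disjoint_Ioi_same,
    ← Ioc_union_Ioi_eq_Ioi hlT,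
    lintegral_union measurableSet_Ioi Ioc_disjoint_Ioi_same]
  rw [add_assoc]
  apply add_le_add ?_ (add_le_add ?_ ?_)
  · calc ∫⁻ t in Ioc (0:ℝ) T, G t * ENNReal.ofReal (Real.exp (-(l * t)))
        ≤ ∫⁻ _ in Ioc (0:ℝ) T, 1 := by
          apply setLIntegral_mono measurable_const
          intro t ht
          calc G t * ENNReal.ofReal (Real.exp (-(l * t))) ≤ 1 * 1 :=
                mul_le_mul' (hG1 t) (ENNReal.ofReal_le_one.2 (Real.exp_le_one_iff.2
                  (neg_nonpos.2 (mul_nonneg hl.le ht.1.le))))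
            _ = 1 := one_mul 1
      _ = volume (Ioc (0:ℝ) T) := setLIntegral_one _
      _ = ENNReal.ofReal T := by rw [Real.volume_Ioc, sub_zero]
  · calc ∫⁻ t in Ioc T (1 / l), G t * ENNReal.ofReal (Real.exp (-(l * t)))
        ≤ ∫⁻ t in Ioc T (1 / l), ENNReal.ofReal (c / t) := by
          apply setLIntegral_mono ((measurable_const.div measurable_id).ennreal_ofReal)
          intro t ht
          calc G t * ENNReal.ofReal (Real.exp (-(l * t)))
              ≤ ENNReal.ofReal (c / t) * 1 := by
                apply mul_le_mul' (hGc t ht.1.le)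
                exact ENNReal.ofReal_le_one.2 (Real.exp_le_one_iff.2 (neg_nonpos.2
                  (mul_nonneg hl.le (lt_trans hT0 ht.1).le)))
            _ = ENNReal.ofReal (c / t) := mul_one _
      _ = ENNReal.ofReal (c * (Real.log (1 / l) - Real.log T)) :=
          aux_lint_div _ _ _ hc hT0 hlT
      _ = ENNReal.ofReal (c * (-Real.log l - Real.log T)) := by
          rw [one_div, Real.log_inv]
  · calc ∫⁻ t in Ioi (1 / l), G t * ENNReal.ofReal (Real.exp (-(l * t)))
        ≤ ∫⁻ t in Ioi (1 / l), ENNReal.ofReal (c * l) * ENNReal.ofReal (Real.exp (-(l * t))) := by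
          apply setLIntegral_mono (by fun_prop)
          intro t ht
          have htl : 1 / l < t := ht
          have ht0 : (0:ℝ) < t := lt_of_le_of_lt (by positivity) htl
          apply mul_le_mul_left
          apply (hGc t (hlT.trans htl.le)).trans
          apply ENNReal.ofReal_le_ofReal
          rw [div_le_iff₀ ht0]
          have h1 : 1 ≤ l * t := by
            have := (div_lt_iff₀ hl).1 htl
            nlinarith
          nlinarith
      _ = ENNReal.ofReal (c * l) * ∫⁻ t in Ioi (1 / l), ENNReal.ofReal (Real.exp (-(l * t))) :=
          lintegral_const_mul' _ _ ENNReal.ofReal_ne_top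
      _ = ENNReal.ofReal (c * l) * ENNReal.ofReal (Real.exp (-(l * (1 / l))) / l) := by
          rw [aux_lint_exp_Ioi hl]
      _ = ENNReal.ofReal (c * l * (Real.exp (-(l * (1 / l))) / l)) :=
          (ENNReal.ofReal_mul (by positivity)).symm
      _ ≤ ENNReal.ofReal c := by
          apply ENNReal.ofReal_le_ofReal
          rw [mul_one_div_cancel hl.ne']
          have h1 : c * l * (Real.exp (-1) / l) = c * Real.exp (-1) := by
            field_simp
          rw [h1]
          calc c * Real.exp (-1) ≤ c * 1 := by
                apply mul_le_mul_of_nonneg_left _ hc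
                exact Real.exp_le_one_iff.2 (by norm_num)
            _ = c := mul_one c

set_option maxHeartbeats 2000000 in
theorem stmt9 {Ω : Type*} [MeasurableSpace Ω] (μ : Measure Ω) [IsProbabilityMeasure μ]
    (U : Ω → ℝ) (hU : Measurable U) (hU0 : ∀ ω, 0 ≤ U ω) (C : ℝ) (hC : 0 < C)
    (htail : Tendsto (fun t => t * (μ {ω | t < U ω}).toReal) atTop (nhds C)) :
    Tendsto (fun l : ℝ => (∫ ω, U ω * Real.exp (-(l * U ω)) ∂μ) / (-Real.log l))
      (nhdsWithin 0 (Ioi 0)) (nhds C) := by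
  set G : ℝ → ℝ≥0∞ := fun t => μ {ω | t < U ω} with hGdef
  have hGmeas : Measurable G :=
    Antitone.measurable (fun s t hst => measure_mono (fun ω h => lt_of_le_of_lt hst h))
  have hG1 : ∀ t, G t ≤ 1 := fun t => prob_le_one
  have hGne : ∀ t, G t ≠ ⊤ := fun t => measure_ne_top μ _
  obtain ⟨T₀, hT₀⟩ := eventually_atTop.1 (htail.eventually (eventually_le_nhds (lt_add_one C)))
  set M : ℝ := max T₀ 1 + C + 1 with hMdef
  have hM1 : 1 ≤ M := by
    have := le_max_right T₀ 1
    linarith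
  have hM0 : 0 ≤ M := by linarith
  have hGM : ∀ t : ℝ, 0 < t → G t ≤ ENNReal.ofReal (M / t) := by
    intro t ht
    rcases le_or_gt (max T₀ 1) t with h | h
    · have h1 : t * (G t).toReal ≤ C + 1 := hT₀ t ((le_max_left _ _).trans h)
      have h2 : (G t).toReal ≤ M / t := by
        rw [le_div_iff₀ ht]
        have h3 : (max T₀ 1 : ℝ) ≥ 1 := le_max_right _ _
        nlinarith
      calc G t = ENNReal.ofReal ((G t).toReal) := (ENNReal.ofReal_toReal (hGne t)).symm
        _ ≤ _ := ENNReal.ofReal_le_ofReal h2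
    · have h2 : (1:ℝ) ≤ M / t := by
        rw [le_div_iff₀ ht]
        nlinarith
      calc G t ≤ 1 := hG1 t
        _ = ENNReal.ofReal 1 := ENNReal.ofReal_one.symm
        _ ≤ _ := ENNReal.ofReal_le_ofReal h2
  set J1 : ℝ → ℝ≥0∞ := fun l => ∫⁻ t in Ioi 0, G t * ENNReal.ofReal (Real.exp (-(l * t)))
    with hJ1def
  set J2 : ℝ → ℝ≥0∞ := fun l => ∫⁻ t in Ioi 0, G t * ENNReal.ofReal (l * t * Real.exp (-(l * t)))
    with hJ2def
  have hJ1fin : ∀ l : ℝ, 0 < l → J1 l ≠ ⊤ := fun l hl => aux_J1_fin hM0 hl hG1 hGM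
  have hJ2le : ∀ l : ℝ, 0 < l → J2 l ≤ ENNReal.ofReal M := fun l hl => aux_J2 hM0 hl hGM
  have hev : ∀ c : ℝ, 0 < c → ∀ᶠ l : ℝ in nhdsWithin 0 (Ioi 0), 0 < l ∧ l < c := by
    intro c hc
    filter_upwards [self_mem_nhdsWithin, (gt_mem_nhds hc).filter_mono nhdsWithin_le_nhds]
      with l h1 h2
    exact ⟨h1, h2⟩
  have hL : Tendsto (fun l : ℝ => -Real.log l) (nhdsWithin 0 (Ioi 0)) atTop :=
    tendsto_neg_atBot_atTop.comp Real.tendsto_log_nhdsGT_zero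
  have h2 : Tendsto (fun l : ℝ => (J2 l).toReal / (-Real.log l)) (nhdsWithin 0 (Ioi 0))
      (nhds 0) := by
    have hup : Tendsto (fun l : ℝ => M / (-Real.log l)) (nhdsWithin 0 (Ioi 0)) (nhds 0) :=
      tendsto_const_nhds.div_atTop hL
    apply tendsto_of_tendsto_of_tendsto_of_le_of_le' tendsto_const_nhds hup
    · filter_upwards [hev 1 one_pos] with l hl
      have hlog : 0 < -Real.log l := by
        have := Real.log_neg hl.1 hl.2
        linarith
      positivity
    · filter_upwards [hev 1 one_pos] with l hl
      have hlog : 0 < -Real.log l := by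
        have := Real.log_neg hl.1 hl.2
        linarith
      have hb : (J2 l).toReal ≤ M := ENNReal.toReal_le_of_le_ofReal hM0 (hJ2le l hl.1)
      gcongr
  have h1 : Tendsto (fun l : ℝ => (J1 l).toReal / (-Real.log l)) (nhdsWithin 0 (Ioi 0))
      (nhds C) := by
    rw [Metric.tendsto_nhds]
    intro ε hε
    set ε' : ℝ := min (ε / 4) (C / 2) with hε'def
    have hε'pos : 0 < ε' := lt_min (by linarith) (by linarith)
    have hε'a : ε' ≤ ε / 4 := min_le_left _ _
    have hε'b : ε' ≤ C / 2 := min_le_right _ _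
    obtain ⟨T₁, hT₁⟩ := eventually_atTop.1 (Metric.tendsto_nhds.1 htail ε' hε'pos)
    set T : ℝ := max T₁ 1 with hTdef
    have hT1 : 1 ≤ T := le_max_right _ _
    have hT0 : 0 < T := lt_of_lt_of_le one_pos hT1
    have hTtail : ∀ t, T ≤ t → |t * (G t).toReal - C| < ε' := by
      intro t ht
      have := hT₁ t ((le_max_left _ _).trans ht)
      rwa [Real.dist_eq] at this
    have hGup : ∀ t, T ≤ t → G t ≤ ENNReal.ofReal ((C + ε') / t) := by
      intro t ht
      have ht0 : 0 < t := lt_of_lt_of_le hT0 ht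
      have h := (abs_lt.1 (hTtail t ht)).2
      have h2 : (G t).toReal ≤ (C + ε') / t := by
        rw [le_div_iff₀ ht0]
        nlinarith
      calc G t = ENNReal.ofReal ((G t).toReal) := (ENNReal.ofReal_toReal (hGne t)).symm
        _ ≤ _ := ENNReal.ofReal_le_ofReal h2
    have hGlo : ∀ t, T ≤ t → ENNReal.ofReal ((C - ε') / t) ≤ G t := by
      intro t ht
      have ht0 : 0 < t := lt_of_lt_of_le hT0 ht
      have h := (abs_lt.1 (hTtail t ht)).1
      have h2 : (C - ε') / t ≤ (G t).toReal := by
        rw [div_le_iff₀ ht0]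
        nlinarith
      calc ENNReal.ofReal ((C - ε') / t) ≤ ENNReal.ofReal ((G t).toReal) :=
            ENNReal.ofReal_le_ofReal h2
        _ = G t := ENNReal.ofReal_toReal (hGne t)
    set δ : ℝ := min (ε / (4 * C)) 1 with hδdef
    have hδpos : 0 < δ := lt_min (by positivity) one_pos
    have hδ1 : δ ≤ 1 := min_le_right _ _
    have hδC : C * δ ≤ ε / 4 := by
      have h := min_le_left (ε / (4 * C)) 1
      have h2 : C * δ ≤ C * (ε / (4 * C)) := mul_le_mul_of_nonneg_left h hC.le
      have h3 : C * (ε / (4 * C)) = ε / 4 := by field_simp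
      linarith
    set D : ℝ := Real.log T - Real.log δ with hDdef
    have hD0 : 0 ≤ D := by
      have h1 : 0 ≤ Real.log T := Real.log_nonneg hT1
      have h2 : Real.log δ ≤ 0 := Real.log_nonpos hδpos.le hδ1
      rw [hDdef]
      linarith
    set K : ℝ := max (max (4 * C * D / ε) ((T + C + ε' + 1) * 4 / ε)) (max D 1) with hKdef
    filter_upwards [hev (min (min (δ / T) (1 / T)) (Real.exp (-K))) (by positivity)] with l hl
    obtain ⟨hl0, hlsm⟩ := hl
    have hlδT : l < δ / T := hlsm.trans_le ((min_le_left _ _).trans (min_le_left _ _))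
    have hlT : l < 1 / T := hlsm.trans_le ((min_le_left _ _).trans (min_le_right _ _))
    have hlK : l < Real.exp (-K) := hlsm.trans_le (min_le_right _ _)
    set L : ℝ := -Real.log l with hLdef
    have hKL : K < L := by
      have h := Real.log_lt_log hl0 hlK
      rw [Real.log_exp] at h
      rw [hLdef]
      linarith
    have hK1 : (1:ℝ) ≤ K := le_trans (le_max_right D 1) (le_max_right _ _)
    have hKD : D ≤ K := le_trans (le_max_left D 1) (le_max_right _ _)
    have hKc1 : 4 * C * D / ε ≤ K := le_trans (le_max_left _ _) (le_max_left _ _)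
    have hKc2 : (T + C + ε' + 1) * 4 / ε ≤ K := le_trans (le_max_right _ _) (le_max_left _ _)
    have hL0 : 0 < L := by linarith
    have hCD : C * D ≤ ε / 4 * L := by
      have h1 : 4 * C * D ≤ K * ε := (div_le_iff₀ hε).1 hKc1
      nlinarith [mul_lt_mul_of_pos_right hKL hε]
    have hTC : T + C + ε' ≤ ε / 4 * L := by
      have h1 : (T + C + ε' + 1) * 4 ≤ K * ε := (div_le_iff₀ hε).1 hKc2
      nlinarith [mul_lt_mul_of_pos_right hKL hε]
    have hTδl : T ≤ δ / l := by
      rw [le_div_iff₀ hl0]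
      have := (lt_div_iff₀ hT0).1 hlδT
      nlinarith
    have hT1l : T ≤ 1 / l := by
      rw [le_div_iff₀ hl0]
      have := (lt_div_iff₀ hT0).1 hlT
      nlinarith
    have hupper := aux_J1_upper hGmeas (by linarith : (0:ℝ) ≤ C + ε') hG1 hGup hT1 hl0 hT1l
    have hlower := aux_J1_lower hGmeas (by linarith : (0:ℝ) ≤ C - ε') hGlo hT1 hδpos hl0 hTδl
    have hlogT0 : 0 ≤ Real.log T := Real.log_nonneg hT1
    have hlogTL : Real.log T ≤ L := by
      have h := Real.log_le_log hT0 hT1l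
      rw [one_div, Real.log_inv] at h
      rw [hLdef]
      linarith
    have hx_up : (J1 l).toReal ≤ T + (C + ε') * (L - Real.log T) + (C + ε') := by
      apply ENNReal.toReal_le_of_le_ofReal
      · have := mul_nonneg (by linarith : (0:ℝ) ≤ C + ε') (by linarith : 0 ≤ L - Real.log T)
        linarith
      · rw [hLdef] at *
        exact hupper
    have hx_lo : (C - ε') * Real.exp (-δ) * (L + Real.log δ - Real.log T) ≤ (J1 l).toReal := by
      have h := (ENNReal.ofReal_le_iff_le_toReal (hJ1fin l hl0)).1 hlower
      have heq : Real.log (δ / l) = Real.log δ + L := by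
        rw [Real.log_div hδpos.ne' hl0.ne', hLdef]
        ring
      rw [heq] at h
      calc (C - ε') * Real.exp (-δ) * (L + Real.log δ - Real.log T)
          = (C - ε') * Real.exp (-δ) * (Real.log δ + L - Real.log T) := by ring
        _ ≤ (J1 l).toReal := h
    rw [Real.dist_eq, abs_lt]
    have hexp1 : Real.exp (-δ) ≤ 1 := Real.exp_le_one_iff.2 (by linarith)
    have hexp2 : 1 - δ ≤ Real.exp (-δ) := by
      have := Real.add_one_le_exp (-δ)
      linarith
    constructor
    · have hkey : (C - ε) * L < (C - ε') * Real.exp (-δ) * (L + Real.log δ - Real.log T) := by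
        have e4 : L + Real.log δ - Real.log T = L - D := by rw [hDdef]; ring
        rw [e4]
        have hc0 : C - ε' > 0 := by linarith
        have e1 : C - ε / 2 ≤ (C - ε') * Real.exp (-δ) := by nlinarith
        have e2 : (C - ε') * Real.exp (-δ) ≤ C := by nlinarith
        have e3 : 0 ≤ L - D := by linarith
        nlinarith
      have hx : (C - ε) * L < (J1 l).toReal := lt_of_lt_of_le hkey hx_lo
      have := (lt_div_iff₀ hL0).2 hx
      linarith
    · have hbound : (J1 l).toReal ≤ T + (C + ε') * L + (C + ε') := by
        have hp := mul_nonneg (by linarith : (0:ℝ) ≤ C + ε') hlogT0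
        nlinarith [hx_up, hp]
      have hkey : T + (C + ε') * L + (C + ε') < (C + ε) * L := by
        have h1 : ε' * L ≤ ε / 4 * L := mul_le_mul_of_nonneg_right hε'a hL0.le
        nlinarith [mul_pos hε hL0, h1, hTC]
      have hx : (J1 l).toReal < (C + ε) * L := lt_of_le_of_lt hbound hkey
      have := (div_lt_iff₀ hL0).2 hx
      linarith
  have hsub := h1.sub h2
  rw [sub_zero] at hsub
  apply Tendsto.congr' ?_ hsub
  filter_upwards [hev 1 one_pos] with l hl
  rw [aux_repr μ U hU hU0 hl.1, sub_div]
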